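/- Every rational number x > 1 admits a unique finite sequence of integers b1, ..., bk with each bi ≥ 2 such that x = b1 - 1/(b2 - 1/( ... - 1/bk)). -/

import Mathlib

/-- Hirzebruch–Jung continued fraction value of a list of integers. -/
def hj : List ℤ → ℚ
  | [] => 0
  | b :: l => (b : ℚ) - 1 / hj l

lemma hj_gt_one : ∀ l : List ℤ, l ≠ [] → (∀ b ∈ l, 2 ≤ b) → 1 < hj l := by
  intro l
  induction l with
  | nil => simp
  | cons b t ih =>
    intro _ hb
    have hb2 : (2:ℚ) ≤ (b:ℚ) := by exact_mod_cast hb b List.mem_cons_self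
    rcases eq_or_ne t [] with rfl | ht
    · simp [hj]; linarith
    · have h1 : 1 < hj t := ih ht (fun c hc => hb c (List.mem_cons_of_mem _ hc))
      have hpos : (0:ℚ) < hj t := by linarith
      have h2 : 1 / hj t < 1 := by rw [div_lt_one hpos]; exact h1
      simp only [hj]
      linarith

lemma hj_bounds {b : ℤ} {t : List ℤ} (ht : t ≠ []) (hb : ∀ c ∈ b :: t, 2 ≤ c) :
    (b:ℚ) - 1 < hj (b :: t) ∧ hj (b :: t) < b := by
  have h1 : 1 < hj t := hj_gt_one t ht (fun c hc => hb c (List.mem_cons_of_mem _ hc))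
  have hpos : (0:ℚ) < hj t := by linarith
  have h2 : 1 / hj t < 1 := by rw [div_lt_one hpos]; exact h1
  have h3 : (0:ℚ) < 1 / hj t := by positivity
  constructor <;> (simp only [hj]; linarith)

lemma hj_exists : ∀ n : ℕ, ∀ x : ℚ, 1 < x → x.den = n →
    ∃ l : List ℤ, l ≠ [] ∧ (∀ b ∈ l, 2 ≤ b) ∧ hj l = x := by
  intro n
  induction n using Nat.strong_induction_on with
  | _ n ih =>
    intro x hx hden
    set b : ℤ := ⌈x⌉ with hbdef
    have hxb : x ≤ b := Int.le_ceil x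
    have hb2 : 2 ≤ b := by
      have : (1:ℚ) < (b:ℚ) := lt_of_lt_of_le hx hxb
      have : (1:ℤ) < b := by exact_mod_cast this
      omega
    rcases eq_or_lt_of_le hxb with heq | hlt
    · refine ⟨[b], by simp, by simpa using hb2, ?_⟩
      simp [hj, ← heq]
    · -- x < b, set r = b - x ∈ (0,1), y = r⁻¹
      set r : ℚ := (b:ℚ) - x with hrdef
      have hr0 : 0 < r := by simp [hrdef]; linarith
      have hr1 : r < 1 := by
        have : (b:ℚ) - 1 < x := by
          have := Int.ceil_lt_add_one x
          push_cast at this ⊢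
          linarith
        simp [hrdef]; linarith
      have hy1 : 1 < r⁻¹ := one_lt_inv_iff₀.mpr ⟨hr0, hr1⟩
      -- denominators
      have hrden : r.den = x.den := by
        have h1 : r.den ∣ x.den := by
          have := Rat.add_den_dvd (-x) ((b:ℚ))
          simpa [hrdef, neg_add_eq_sub] using this
        have h2 : x.den ∣ r.den := by
          have := Rat.add_den_dvd (-r) ((b:ℚ))
          have hx' : (-r) + (b:ℚ) = x := by rw [hrdef]; ring
          rw [hx'] at this
          simpa using this
        exact Nat.dvd_antisymm h1 h2
      have hnum_pos : 0 < r.num := Rat.num_pos.mpr hr0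
      have hnum_lt : r.num < (r.den : ℤ) := by
        have hd : (0:ℚ) < (r.den : ℚ) := by positivity
        have h := hr1
        rw [← Rat.num_div_den r, div_lt_one hd] at h
        exact_mod_cast h
      have hinvden : (r⁻¹.den : ℤ) ∣ r.num := by
        conv_lhs => rw [← Rat.num_divInt_den r, Rat.inv_divInt]
        exact Rat.den_dvd _ _
      have hlt' : r⁻¹.den < n := by
        have h1 : (r⁻¹.den : ℤ) ≤ r.num :=
          Int.le_of_dvd hnum_pos hinvden
        have h2 : (r⁻¹.den : ℤ) < (x.den : ℤ) := by rw [← hrden]; omega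
        rw [← hden]
        exact_mod_cast h2
      obtain ⟨t, ht, ht2, htval⟩ := ih r⁻¹.den hlt' r⁻¹ hy1 rfl
      refine ⟨b :: t, by simp, ?_, ?_⟩
      · intro c hc
        rcases List.mem_cons.mp hc with rfl | hc
        · exact hb2
        · exact ht2 c hc
      · simp only [hj, htval, one_div, inv_inv, hrdef]
        ring

lemma hj_inj : ∀ l l' : List ℤ, l ≠ [] → l' ≠ [] → (∀ b ∈ l, 2 ≤ b) →
    (∀ b ∈ l', 2 ≤ b) → hj l = hj l' → l = l' := by
  intro l
  induction l with
  | nil => simp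
  | cons b t ih =>
    intro l' _ hl' hb hb' heq
    rcases l' with _ | ⟨b', t'⟩
    · simp at hl'
    · rcases eq_or_ne t [] with rfl | ht <;> rcases eq_or_ne t' [] with rfl | ht'
      · -- both singletons
        have : (b:ℚ) = b' := by simpa [hj] using heq
        have : b = b' := by exact_mod_cast this
        simp [this]
      · exfalso
        have h1 : hj [b] = (b:ℚ) := by simp [hj]
        obtain ⟨hlo, hhi⟩ := hj_bounds ht' hb'
        rw [← heq, h1] at hlo hhi
        have hlo' : b' - 1 < b := by exact_mod_cast hlo
        have hhi' : b < b' := by exact_mod_cast hhi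
        omega
      · exfalso
        have h1 : hj [b'] = (b':ℚ) := by simp [hj]
        obtain ⟨hlo, hhi⟩ := hj_bounds ht hb
        rw [heq, h1] at hlo hhi
        have hlo' : b - 1 < b' := by exact_mod_cast hlo
        have hhi' : b' < b := by exact_mod_cast hhi
        omega
      · obtain ⟨hlo, hhi⟩ := hj_bounds ht hb
        obtain ⟨hlo', hhi'⟩ := hj_bounds ht' hb'
        rw [heq] at hlo hhi
        have e1 : (b':ℚ) - 1 < b := by linarith
        have e2 : (b:ℚ) - 1 < b' := by linarith
        have e1' : b' - 1 < b := by exact_mod_cast e1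
        have e2' : b - 1 < b' := by exact_mod_cast e2
        have hbb : b = b' := by omega
        subst hbb
        have h1 : 1 < hj t := hj_gt_one t ht (fun c hc => hb c (List.mem_cons_of_mem _ hc))
        have h1' : 1 < hj t' := hj_gt_one t' ht' (fun c hc => hb' c (List.mem_cons_of_mem _ hc))
        have heqt : hj t = hj t' := by
          simp only [hj] at heq
          have : 1 / hj t = 1 / hj t' := by linarith
          field_simp at this
          linarith [this]
        have := ih t' ht ht' (fun c hc => hb c (List.mem_cons_of_mem _ hc))
          (fun c hc => hb' c (List.mem_cons_of_mem _ hc)) heqt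
        simp [this]

/-- Every rational `x > 1` has a unique Hirzebruch–Jung continued fraction
expansion with all entries `≥ 2`. -/
theorem hj_exists_unique (x : ℚ) (hx : 1 < x) :
    ∃! l : List ℤ, l ≠ [] ∧ (∀ b ∈ l, 2 ≤ b) ∧ hj l = x := by
  obtain ⟨l, h1, h2, h3⟩ := hj_exists x.den x hx rfl
  refine ⟨l, ⟨h1, h2, h3⟩, ?_⟩
  rintro l' ⟨h1', h2', h3'⟩
  exact hj_inj l' l h1' h1 h2' h2 (by rw [h3, h3'])
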